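/- Fix a positive integer n. Let λ ∈ H(1,n) be a regular diagram with λ₁ > n, and let μ be obtained from λ by deleting one box from the first row. Then F_λ(μ) = {λ}, i.e. λ is the unique element ν ∈ S(μ) with c̃_ν = c̃_λ. -/

import Mathlib

/-- A partition: a weakly decreasing sequence of naturals indexed from 1 (value at 0 unused, set to 0). -/
def IsPartition (P : ℕ → ℕ) : Prop :=
  P 0 = 0 ∧ ∀ i, 1 ≤ i → P (i + 1) ≤ P i

/-- `Q` is obtained from `P` by adding the box `(i,j)`. -/
def AddsBox (P Q : ℕ → ℕ) (i j : ℕ) : Prop :=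
  1 ≤ i ∧ j = P i + 1 ∧ Q = Function.update P i (P i + 1) ∧ IsPartition Q

/-- `Q` is obtained from `P` by removing the box `(i,j)`. -/
def RemovesBox (P Q : ℕ → ℕ) (i j : ℕ) : Prop :=
  1 ≤ i ∧ j = P i ∧ 1 ≤ P i ∧ Q = Function.update P i (P i - 1) ∧ IsPartition Q

/-- `Q ∈ S(P)`. -/
def InS (P Q : ℕ → ℕ) : Prop :=
  Q = P ∨ (∃ i j, AddsBox P Q i j) ∨ (∃ i j, RemovesBox P Q i j)

/-- `c̃_λ = Σ_{(i,j)∈λ} (2j − 2i + 1 − 2n)`. -/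
def ctilde (n : ℕ) (P : ℕ → ℕ) (N : ℕ) : ℤ :=
  ∑ i ∈ Finset.Icc 1 N, ∑ j ∈ Finset.Icc 1 (P i),
    (2 * (j : ℤ) - 2 * (i : ℤ) + 1 - 2 * (n : ℤ))

/-- `F_λ(μ) = {ν ∈ S(μ) : c̃_ν = c̃_λ}`. -/
def Fset (n N : ℕ) (L M : ℕ → ℕ) : Set (ℕ → ℕ) :=
  {Q | InS M Q ∧ ctilde n Q N = ctilde n L N}

/-- The conjugate partition. -/
def conj (P : ℕ → ℕ) (N : ℕ) (j : ℕ) : ℕ :=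
  ((Finset.Icc 1 N).filter (fun i => j ≤ P i)).card

lemma part_anti (P : ℕ → ℕ) (hP : IsPartition P) :
    ∀ a b, 1 ≤ a → a ≤ b → P b ≤ P a := by
  intro a b ha hab
  induction b with
  | zero => omega
  | succ b ih =>
    rcases Nat.lt_or_ge a (b+1) with h | h
    · exact le_trans (hP.2 b (by omega)) (ih (by omega))
    · have : a = b + 1 := by omega
      simp [this]

lemma ctilde_update (n N : ℕ) (Q : ℕ → ℕ) (i v : ℕ) (hi1 : 1 ≤ i) (hiN : i ≤ N) :
    ctilde n (Function.update Q i v) N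
      = ctilde n Q N
        + (∑ j ∈ Finset.Icc 1 v, (2 * (j : ℤ) - 2 * (i : ℤ) + 1 - 2 * (n : ℤ)))
        - ∑ j ∈ Finset.Icc 1 (Q i), (2 * (j : ℤ) - 2 * (i : ℤ) + 1 - 2 * (n : ℤ)) := by
  classical
  have hmem : i ∈ Finset.Icc 1 N := Finset.mem_Icc.mpr ⟨hi1, hiN⟩
  unfold ctilde
  have h1 : (fun r => ∑ j ∈ Finset.Icc 1 (Function.update Q i v r),
        (2 * (j : ℤ) - 2 * (r : ℤ) + 1 - 2 * (n : ℤ)))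
      = Function.update (fun r => ∑ j ∈ Finset.Icc 1 (Q r),
        (2 * (j : ℤ) - 2 * (r : ℤ) + 1 - 2 * (n : ℤ))) i
        (∑ j ∈ Finset.Icc 1 v, (2 * (j : ℤ) - 2 * (i : ℤ) + 1 - 2 * (n : ℤ))) := by
    funext r
    by_cases h : r = i
    · subst h; simp
    · simp [Function.update_of_ne h]
  calc ∑ r ∈ Finset.Icc 1 N, ∑ j ∈ Finset.Icc 1 (Function.update Q i v r),
        (2 * (j : ℤ) - 2 * (r : ℤ) + 1 - 2 * (n : ℤ))
      = ∑ r ∈ Finset.Icc 1 N, Function.update (fun r => ∑ j ∈ Finset.Icc 1 (Q r),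
          (2 * (j : ℤ) - 2 * (r : ℤ) + 1 - 2 * (n : ℤ))) i
          (∑ j ∈ Finset.Icc 1 v, (2 * (j : ℤ) - 2 * (i : ℤ) + 1 - 2 * (n : ℤ))) r := by
        rw [← h1]
    _ = _ := by
        rw [Finset.sum_update_of_mem hmem,
          ← Finset.sum_erase_add _ _ hmem, Finset.erase_eq]
        ring

lemma Icc_succ_sum (n i m : ℕ) :
    (∑ j ∈ Finset.Icc 1 (m + 1), (2 * (j : ℤ) - 2 * (i : ℤ) + 1 - 2 * (n : ℤ)))
      = (∑ j ∈ Finset.Icc 1 m, (2 * (j : ℤ) - 2 * (i : ℤ) + 1 - 2 * (n : ℤ)))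
        + (2 * ((m+1) : ℤ) - 2 * (i : ℤ) + 1 - 2 * (n : ℤ)) := by
  rw [Finset.sum_Icc_succ_top (by omega)]
  push_cast; ring

lemma ctilde_add (n N : ℕ) (Q : ℕ → ℕ) (i : ℕ) (hi1 : 1 ≤ i) (hiN : i ≤ N) :
    ctilde n (Function.update Q i (Q i + 1)) N
      = ctilde n Q N + (2 * ((Q i + 1) : ℤ) - 2 * (i : ℤ) + 1 - 2 * (n : ℤ)) := by
  rw [ctilde_update n N Q i (Q i + 1) hi1 hiN, Icc_succ_sum]
  push_cast; ring

lemma ctilde_sub (n N : ℕ) (Q : ℕ → ℕ) (i : ℕ) (hi1 : 1 ≤ i) (hiN : i ≤ N)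
    (hQi : 1 ≤ Q i) :
    ctilde n (Function.update Q i (Q i - 1)) N
      = ctilde n Q N - (2 * ((Q i) : ℤ) - 2 * (i : ℤ) + 1 - 2 * (n : ℤ)) := by
  rw [ctilde_update n N Q i (Q i - 1) hi1 hiN]
  have h : Q i = (Q i - 1) + 1 := by omega
  rw [h, Icc_succ_sum]
  push_cast [h.symm]
  have : ((Q i - 1 : ℕ) : ℤ) = (Q i : ℤ) - 1 := by omega
  rw [this]; ring

/-- If `λ ∈ H(1,n)` is regular with `λ₁ > n` and `μ` is obtained from `λ` by deleting one box
from the first row, then `F_λ(μ) = {λ}`. -/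
theorem Fset_regular (n : ℕ) (hn : 1 ≤ n) (P : ℕ → ℕ) (hP : IsPartition P)
    (hPH : P 2 ≤ n) (hP1 : n < P 1)
    (N : ℕ) (hN : ∀ r, N ≤ r → P r = 0)
    (hreg : ¬ ∃ j, 1 ≤ j ∧ j ≤ n ∧
      (P 1 : ℤ) - (n : ℤ) = (conj P N j : ℤ) + (n : ℤ) - (j : ℤ))
    (M : ℕ → ℕ) (hM : RemovesBox P M 1 (P 1)) :
    Fset n N P M = {P} := by
  obtain ⟨-, -, hP1pos, hMdef, hMpart⟩ := hM
  have hN2 : 2 ≤ N := by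
    by_contra h
    have := hN 1 (by omega)
    omega
  have hM1 : M 1 = P 1 - 1 := by rw [hMdef]; simp
  have hMr : ∀ r, r ≠ 1 → M r = P r := by
    intro r hr; rw [hMdef, Function.update_of_ne hr]
  -- P = update M 1 (M 1 + 1)
  have hPM : P = Function.update M 1 (M 1 + 1) := by
    funext r
    by_cases h : r = 1
    · subst h; rw [Function.update_self, hM1]; omega
    · rw [Function.update_of_ne h, hMr r h]
  -- ctilde relation
  have hcM : ctilde n P N = ctilde n M N
      + (2 * ((M 1 + 1) : ℤ) - 2 * (1 : ℤ) + 1 - 2 * (n : ℤ)) := by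
    conv_lhs => rw [hPM]
    exact ctilde_add n N M 1 le_rfl (by omega)
  have hM1P : ((M 1 : ℤ) + 1) = (P 1 : ℤ) := by
    rw [hM1]; omega
  ext Q
  simp only [Fset, Set.mem_setOf_eq, Set.mem_singleton_iff]
  constructor
  · rintro ⟨hQS, hQc⟩
    rcases hQS with rfl | ⟨i, j, hi1, hj, hQdef, hQpart⟩ | ⟨i, j, hi1, hj, hMi1, hQdef, hQpart⟩
    · -- Q = M : contradiction
      exfalso
      rw [hcM] at hQc
      push_cast at hQc
      omega
    · -- addition at (i, M i + 1)
      have hiN : i ≤ N := by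
        by_contra h
        push_neg at h
        have hMi : M i = 0 := by
          rw [hMr i (by omega), hN i (by omega)]
        have hMi' : M (i - 1) = 0 := by
          rw [hMr (i-1) (by omega), hN (i-1) (by omega)]
        have := hQpart.2 (i - 1) (by omega)
        have hii : i - 1 + 1 = i := by omega
        rw [hii, hQdef, Function.update_self,
          Function.update_of_ne (by omega : i - 1 ≠ i)] at this
        omega
      have hc : ctilde n Q N = ctilde n M N
          + (2 * ((M i + 1) : ℤ) - 2 * (i : ℤ) + 1 - 2 * (n : ℤ)) := by
        rw [hQdef]; exact ctilde_add n N M i hi1 hiN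
      rw [hc, hcM] at hQc
      have key : (M i : ℤ) + 1 - (i : ℤ) = (M 1 : ℤ) := by push_cast at hQc ⊢; omega
      rcases eq_or_lt_of_le hi1 with h1 | h2
    -- i = 1
      · rw [← h1] at hQdef
        rw [hQdef, ← hPM]
      · -- i ≥ 2 : impossible
        exfalso
        have hMi : M i = P i := hMr i (by omega)
        have hPi : P i ≤ n := le_trans (part_anti P hP 2 i (by omega) (by omega)) hPH
        rw [hMi] at key
        have : (P i : ℤ) ≤ (n : ℤ) := by exact_mod_cast hPi
        rw [hM1] at key
        have h1P : ((P 1 - 1 : ℕ) : ℤ) = (P 1 : ℤ) - 1 := by omega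
        rw [h1P] at key
        have hn' : (n : ℤ) < (P 1 : ℤ) := by exact_mod_cast hP1
        have hi2 : (2 : ℤ) ≤ (i : ℤ) := by exact_mod_cast (by omega : 2 ≤ i)
        omega
    · -- removal at (i, M i)
      exfalso
      have hiN : i ≤ N := by
        by_contra h
        push_neg at h
        have : M i = 0 := by rw [hMr i (by omega), hN i (by omega)]
        omega
      have hc : ctilde n Q N = ctilde n M N
          - (2 * ((M i) : ℤ) - 2 * (i : ℤ) + 1 - 2 * (n : ℤ)) := by
        rw [hQdef]; exact ctilde_sub n N M i hi1 hiN hMi1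
      rw [hc, hcM] at hQc
      have key : (i : ℤ) - (M i : ℤ) + 2 * (n : ℤ) = (M 1 : ℤ) + 1 := by
        push_cast at hQc ⊢; omega
      rcases eq_or_lt_of_le hi1 with h1 | h2
      · -- i = 1 : then P 1 = n + 1
        rw [← h1] at key hMi1 hQdef
        rw [hM1] at key hMi1
        have hP1n : P 1 = n + 1 := by omega
        -- corner condition : P 2 ≤ P 1 - 2
        have hcorner : P 2 ≤ P 1 - 2 := by
          have := hQpart.2 1 le_rfl
          rw [hQdef, Function.update_self,
            Function.update_of_ne (by omega : (2:ℕ) ≠ 1)] at this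
          rw [hMr 2 (by omega)] at this
          omega
        apply hreg
        refine ⟨n, hn, le_rfl, ?_⟩
        have hconj : conj P N n = 1 := by
          unfold conj
          have : (Finset.Icc 1 N).filter (fun r => n ≤ P r) = {1} := by
            ext r
            simp only [Finset.mem_filter, Finset.mem_Icc, Finset.mem_singleton]
            constructor
            · rintro ⟨⟨hr1, hrN⟩, hnr⟩
              by_contra hne
              have hr2 : 2 ≤ r := by omega
              have := le_trans (part_anti P hP 2 r (by omega) hr2) hPH
              have := part_anti P hP 2 r (by omega) hr2
              omega
            · rintro rfl
              exact ⟨⟨le_rfl, by omega⟩, by omega⟩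
          rw [this]; simp
        rw [hconj, hP1n]; push_cast; ring
      · -- i ≥ 2
        have hMi : M i = P i := hMr i (by omega)
        rw [hMi] at key hMi1
        -- corner condition : P (i+1) ≤ P i - 1
        have hcorner : P (i + 1) ≤ P i - 1 := by
          have := hQpart.2 i hi1
          rw [hQdef, Function.update_self,
            Function.update_of_ne (by omega : i + 1 ≠ i)] at this
          rw [hMr (i+1) (by omega), hMi] at this
          omega
        have hPin : P i ≤ n := le_trans (part_anti P hP 2 i (by omega) (by omega)) hPH
        apply hreg
        refine ⟨P i, hMi1, hPin, ?_⟩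
        have hconj : conj P N (P i) = i := by
          unfold conj
          have hfe : (Finset.Icc 1 N).filter (fun r => P i ≤ P r) = Finset.Icc 1 i := by
            ext r
            simp only [Finset.mem_filter, Finset.mem_Icc]
            constructor
            · rintro ⟨⟨hr1, hrN⟩, hpr⟩
              refine ⟨hr1, ?_⟩
              by_contra hri
              have : P r ≤ P (i + 1) := part_anti P hP (i+1) r (by omega) (by omega)
              omega
            · rintro ⟨hr1, hri⟩
              exact ⟨⟨hr1, le_trans hri hiN⟩, part_anti P hP r i hr1 hri⟩
          rw [hfe, Nat.card_Icc]; omega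
        rw [hconj]
        rw [hM1] at key
        have h1P : ((P 1 - 1 : ℕ) : ℤ) = (P 1 : ℤ) - 1 := by omega
        rw [h1P] at key
        omega
  · rintro rfl
    refine ⟨Or.inr (Or.inl ⟨1, M 1 + 1, le_rfl, rfl, hPM, hP⟩), rfl⟩
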